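/- Assume ρ > 0 and ω ∈ ℂ with |ω| = 1, let V ∈ ℂ^d satisfy QV = ρωV, and assume hypothesis (rsr). Then there exists exactly one continuous function Φ : [0,1] → ℂ^d satisfying the basic dilation equation. -/

import Mathlib

open scoped Classical BigOperators
open Filter Asymptotics

attribute [local instance] Matrix.linftyOpNormedAddCommGroup Matrix.linftyOpNormedRing

noncomputable section

/-- `A_w = A_{w_1} ⋯ A_{w_K}` for a word `w` of length `K` over the digit alphabet. -/
def wordProd {B d : ℕ} (A : Fin B → Matrix (Fin d) (Fin d) ℂ) {K : ℕ}
    (w : Fin K → Fin B) : Matrix (Fin d) (Fin d) ℂ :=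
  ((List.ofFn w).map A).prod

/-- `(0.w)_B = Σ_{k=1}^K w_k B^{-k}`. -/
def wordVal {B K : ℕ} (w : Fin K → Fin B) : ℝ :=
  ∑ k : Fin K, (w k : ℝ) / (B : ℝ) ^ ((k : ℕ) + 1)

/-- The running sum `S_K(x) = Σ_{|w|=K, (0.w)_B ≤ x} A_w C`. -/
def runSum {B d : ℕ} (A : Fin B → Matrix (Fin d) (Fin d) ℂ) (C : Fin d → ℂ)
    (K : ℕ) (x : ℝ) : Fin d → ℂ :=
  ∑ w : Fin K → Fin B, if wordVal w ≤ x then (wordProd A w).mulVec C else 0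

/-- The basic dilation equation for data `ρ, ω, V`. -/
def DilationEq {B d : ℕ} (A : Fin B → Matrix (Fin d) (Fin d) ℂ) (ρ : ℝ) (ω : ℂ)
    (V : Fin d → ℂ) (Φ : ℝ → Fin d → ℂ) : Prop :=
  Φ 0 = 0 ∧ Φ 1 = V ∧
    ∀ r : Fin B, ∀ x : ℝ, (r : ℝ) / B ≤ x → x < ((r : ℝ) + 1) / B →
      Φ x = ((ρ : ℂ) * ω)⁻¹ •
        ((∑ s ∈ Finset.univ.filter fun s : Fin B => s < r, (A s).mulVec V) +
          (A r).mulVec (Φ (B * x - r)))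

namespace DilationAux

open Set

variable {B d : ℕ}

lemma sum_mulVec {α : Type*} (s : Finset α) (M : α → Matrix (Fin d) (Fin d) ℂ)
    (v : Fin d → ℂ) : (∑ r ∈ s, M r).mulVec v = ∑ r ∈ s, (M r).mulVec v :=
  map_sum (AddMonoidHom.mk' (fun N : Matrix (Fin d) (Fin d) ℂ => N.mulVec v)
    (fun N₁ N₂ => Matrix.add_mulVec _ _ _)) M s

def pt0 : ↥(Icc (0:ℝ) 1) := ⟨0, left_mem_Icc.2 zero_le_one⟩
def pt1 : ↥(Icc (0:ℝ) 1) := ⟨1, right_mem_Icc.2 zero_le_one⟩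
def pr (x : ℝ) : ↥(Icc (0:ℝ) 1) := projIcc 0 1 zero_le_one x

/-- the basic operator -/
def T (A : Fin B → Matrix (Fin d) (Fin d) ℂ) (c : ℂ)
    (f : C(↥(Icc (0:ℝ) 1), Fin d → ℂ)) : C(↥(Icc (0:ℝ) 1), Fin d → ℂ) :=
  ⟨fun x => c • ∑ s : Fin B, (A s).mulVec (f (pr ((B:ℝ) * (x:ℝ) - (s:ℝ)))), by
    refine Continuous.const_smul ?_ c
    refine continuous_finset_sum _ fun s _ => ?_
    exact Continuous.matrix_mulVec continuous_const
      (f.continuous.comp (continuous_projIcc.comp (by continuity)))⟩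

lemma T_apply (A : Fin B → Matrix (Fin d) (Fin d) ℂ) (c : ℂ)
    (f : C(↥(Icc (0:ℝ) 1), Fin d → ℂ)) (x : ↥(Icc (0:ℝ) 1)) :
    T A c f x = c • ∑ s : Fin B, (A s).mulVec (f (pr ((B:ℝ) * (x:ℝ) - (s:ℝ)))) := rfl

lemma key (A : Fin B → Matrix (Fin d) (Fin d) ℂ) (V : Fin d → ℂ)
    (f : C(↥(Icc (0:ℝ) 1), Fin d → ℂ)) (hf0 : f pt0 = 0) (hf1 : f pt1 = V)
    (hB : 0 < B) (r : Fin B) (x : ℝ) (hx1 : (r : ℝ) / B ≤ x) (hx2 : x < ((r : ℝ) + 1) / B) :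
    ∑ s : Fin B, (A s).mulVec (f (pr ((B:ℝ) * x - (s:ℝ)))) =
      (∑ s ∈ Finset.univ.filter fun s : Fin B => s < r, (A s).mulVec V) +
        (A r).mulVec (f (pr ((B:ℝ) * x - (r:ℝ)))) := by
  have hB' : (0:ℝ) < B := by exact_mod_cast hB
  have h1 : (r : ℝ) ≤ B * x := by
    rw [div_le_iff₀ hB'] at hx1; linarith
  have h2 : (B:ℝ) * x < (r : ℝ) + 1 := by
    rw [lt_div_iff₀ hB'] at hx2; linarith
  have step : ∀ s : Fin B, (A s).mulVec (f (pr ((B:ℝ) * x - (s:ℝ)))) =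
      (if s < r then (A s).mulVec V else 0) +
        (if s = r then (A r).mulVec (f (pr ((B:ℝ) * x - (r:ℝ)))) else 0) := by
    intro s
    rcases lt_trichotomy s r with h | h | h
    · have hsr : (s : ℝ) + 1 ≤ (r : ℝ) := by
        have h' : (s:ℕ) + 1 ≤ (r:ℕ) := h
        exact_mod_cast h'
      have hpr : pr ((B:ℝ) * x - (s:ℝ)) = pt1 := projIcc_of_right_le _ (by linarith)
      rw [if_pos h, if_neg (ne_of_lt h), add_zero, hpr, hf1]
    · subst h
      rw [if_neg (lt_irrefl s), if_pos rfl, zero_add]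
    · have hrs : (r : ℝ) + 1 ≤ (s : ℝ) := by
        have h' : (r:ℕ) + 1 ≤ (s:ℕ) := h
        exact_mod_cast h'
      have hpr : pr ((B:ℝ) * x - (s:ℝ)) = pt0 := projIcc_of_le_left _ (by linarith)
      rw [if_neg (not_lt_of_gt h), if_neg (ne_of_gt h), hpr, hf0, Matrix.mulVec_zero,
        add_zero]
  rw [Finset.sum_congr rfl fun s _ => step s, Finset.sum_add_distrib,
    Finset.sum_ite_eq' Finset.univ r, if_pos (Finset.mem_univ r), ← Finset.sum_filter]

lemma T_pt0 (A : Fin B → Matrix (Fin d) (Fin d) ℂ) (c : ℂ)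
    (f : C(↥(Icc (0:ℝ) 1), Fin d → ℂ)) (hf0 : f pt0 = 0) :
    T A c f pt0 = 0 := by
  rw [T_apply]
  have h : ∀ s : Fin B, (A s).mulVec (f (pr ((B:ℝ) * ((pt0 : ↥(Icc (0:ℝ) 1)) : ℝ) - (s:ℝ)))) = 0 := by
    intro s
    have hc : pr ((B:ℝ) * ((pt0 : ↥(Icc (0:ℝ) 1)) : ℝ) - (s:ℝ)) = pt0 := by
      refine projIcc_of_le_left _ ?_
      have : ((pt0 : ↥(Icc (0:ℝ) 1)) : ℝ) = 0 := rfl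
      rw [this]
      simp
    rw [hc, hf0, Matrix.mulVec_zero]
  rw [Finset.sum_congr rfl fun s _ => h s, Finset.sum_const_zero, smul_zero]

lemma T_pt1 (A : Fin B → Matrix (Fin d) (Fin d) ℂ) {μ c : ℂ} (hμ : μ ≠ 0) (hc : c = μ⁻¹)
    (V : Fin d → ℂ) (hV : (∑ r, A r).mulVec V = μ • V)
    (f : C(↥(Icc (0:ℝ) 1), Fin d → ℂ)) (hf1 : f pt1 = V) :
    T A c f pt1 = V := by
  rw [T_apply]
  have h : ∀ s : Fin B, (A s).mulVec (f (pr ((B:ℝ) * ((pt1 : ↥(Icc (0:ℝ) 1)) : ℝ) - (s:ℝ)))) =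
      (A s).mulVec V := by
    intro s
    have hc' : pr ((B:ℝ) * ((pt1 : ↥(Icc (0:ℝ) 1)) : ℝ) - (s:ℝ)) = pt1 := by
      refine projIcc_of_right_le _ ?_
      have h1 : ((pt1 : ↥(Icc (0:ℝ) 1)) : ℝ) = 1 := rfl
      have h2 : (s : ℝ) + 1 ≤ (B:ℝ) := by exact_mod_cast s.isLt
      rw [h1]; linarith
    rw [hc', hf1]
  rw [Finset.sum_congr rfl fun s _ => h s, ← sum_mulVec, hV, hc, smul_smul,
    inv_mul_cancel₀ hμ, one_smul]

lemma T_lip (A : Fin B → Matrix (Fin d) (Fin d) ℂ) {c : ℂ} {lam ρ : ℝ}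
    (hρ : 0 < ρ) (hlam : 0 ≤ lam) (hA : ∀ r, ‖A r‖ ≤ lam) (hc : ‖c‖ = ρ⁻¹)
    (f g : C(↥(Icc (0:ℝ) 1), Fin d → ℂ)) (h0 : f pt0 = g pt0) (h1 : f pt1 = g pt1) :
    dist (T A c f) (T A c g) ≤ (lam / ρ) * dist f g := by
  set D := dist f g with hD
  have hD0 : 0 ≤ D := dist_nonneg
  rw [ContinuousMap.dist_le (by positivity)]
  intro x
  have hx0 : (0:ℝ) ≤ (x:ℝ) := x.2.1
  set n := ⌊(B:ℝ) * (x:ℝ)⌋₊ with hn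
  have hzero : ∀ s : Fin B, (s:ℕ) ≠ n →
      f (pr ((B:ℝ) * (x:ℝ) - (s:ℝ))) = g (pr ((B:ℝ) * (x:ℝ) - (s:ℝ))) := by
    intro s hs
    rcases lt_or_gt_of_ne hs with h | h
    · have hle : (1:ℝ) ≤ (B:ℝ) * (x:ℝ) - (s:ℝ) := by
        have h1' : ((s:ℕ):ℝ) + 1 ≤ (n:ℝ) := by exact_mod_cast h
        have h2' : (n:ℝ) ≤ (B:ℝ) * (x:ℝ) := Nat.floor_le (by positivity)
        linarith
      have hpr : pr ((B:ℝ) * (x:ℝ) - (s:ℝ)) = pt1 := projIcc_of_right_le _ hle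
      rw [hpr, h1]
    · have hle : (B:ℝ) * (x:ℝ) - (s:ℝ) ≤ 0 := by
        have h1' : (n:ℝ) + 1 ≤ ((s:ℕ):ℝ) := by exact_mod_cast h
        have h2' : (B:ℝ) * (x:ℝ) < (n:ℝ) + 1 := Nat.lt_floor_add_one _
        linarith
      have hpr : pr ((B:ℝ) * (x:ℝ) - (s:ℝ)) = pt0 := projIcc_of_le_left _ hle
      rw [hpr, h0]
  have e1 : T A c f x - T A c g x =
      c • ∑ s : Fin B, (A s).mulVec
        (f (pr ((B:ℝ) * (x:ℝ) - (s:ℝ))) - g (pr ((B:ℝ) * (x:ℝ) - (s:ℝ)))) := by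
    rw [T_apply, T_apply, ← smul_sub, ← Finset.sum_sub_distrib]
    congr 1
    refine Finset.sum_congr rfl fun s _ => ?_
    rw [Matrix.mulVec_sub]
  have e2 : ∀ s : Fin B,
      ‖(A s).mulVec (f (pr ((B:ℝ) * (x:ℝ) - (s:ℝ))) - g (pr ((B:ℝ) * (x:ℝ) - (s:ℝ))))‖ ≤
        (if (s:ℕ) = n then lam * D else 0) := by
    intro s
    by_cases hs : (s:ℕ) = n
    · rw [if_pos hs]
      refine le_trans (Matrix.linfty_opNorm_mulVec _ _) ?_
      refine mul_le_mul (hA s) ?_ (norm_nonneg _) hlam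
      rw [← dist_eq_norm]
      exact ContinuousMap.dist_apply_le_dist _
    · rw [if_neg hs, hzero s hs, sub_self, Matrix.mulVec_zero, norm_zero]
  have e3 : ∑ s : Fin B, (if (s:ℕ) = n then lam * D else 0) ≤ lam * D := by
    by_cases hn' : n < B
    · have hcongr : ∀ s : Fin B, (if (s:ℕ) = n then lam * D else 0) =
          (if s = (⟨n, hn'⟩ : Fin B) then lam * D else 0) := by
        intro s
        simp [Fin.ext_iff]
      rw [Finset.sum_congr rfl fun s _ => hcongr s, Finset.sum_ite_eq' Finset.univ,
        if_pos (Finset.mem_univ _)]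
    · have hcongr : ∀ s : Fin B, (if (s:ℕ) = n then lam * D else 0) = 0 := by
        intro s
        refine if_neg fun h => hn' ?_
        exact h ▸ s.isLt
      rw [Finset.sum_congr rfl fun s _ => hcongr s, Finset.sum_const_zero]
      positivity
  calc dist (T A c f x) (T A c g x) = ‖T A c f x - T A c g x‖ := dist_eq_norm _ _
    _ = ‖c‖ * ‖∑ s : Fin B, (A s).mulVec
        (f (pr ((B:ℝ) * (x:ℝ) - (s:ℝ))) - g (pr ((B:ℝ) * (x:ℝ) - (s:ℝ))))‖ := by
        rw [e1, norm_smul]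
    _ ≤ ρ⁻¹ * (lam * D) := by
        rw [hc]
        refine mul_le_mul_of_nonneg_left ?_ (inv_nonneg.2 hρ.le)
        exact le_trans (norm_sum_le _ _) (le_trans (Finset.sum_le_sum fun s _ => e2 s) e3)
    _ = lam / ρ * D := by rw [div_eq_mul_inv]; ring

end DilationAux

open DilationAux Set

/-- under (rsr), the basic dilation equation has exactly one
continuous solution on `[0,1]`. -/

theorem dilationEq_existsUnique_continuous (B d : ℕ) (hB : 2 ≤ B) (hd : 1 ≤ d)
    (A : Fin B → Matrix (Fin d) (Fin d) ℂ)
    (ρ : ℝ) (hρ : 0 < ρ) (ω : ℂ) (hω : ‖ω‖ = 1)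
    (V : Fin d → ℂ) (hV : (∑ r, A r).mulVec V = ((ρ : ℂ) * ω) • V)
    (lam : ℝ) (hlam : 0 < lam) (hlamρ : lam < ρ) (hA : ∀ r, ‖A r‖ ≤ lam) :
    ∃ Φ : ℝ → Fin d → ℂ,
      (ContinuousOn Φ (Set.Icc 0 1) ∧ DilationEq A ρ ω V Φ) ∧
        ∀ Ψ : ℝ → Fin d → ℂ, ContinuousOn Ψ (Set.Icc 0 1) → DilationEq A ρ ω V Ψ →
          Set.EqOn Ψ Φ (Set.Icc 0 1) := by
  classical
  have hB0 : 0 < B := by omega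
  have hB' : (0:ℝ) < B := by exact_mod_cast hB0
  set μ : ℂ := (ρ : ℂ) * ω with hμdef
  have hμ : μ ≠ 0 := by
    refine mul_ne_zero ?_ ?_
    · exact_mod_cast hρ.ne'
    · intro h; rw [h] at hω; simp at hω
  set c : ℂ := μ⁻¹ with hcdef
  have hnc : ‖c‖ = ρ⁻¹ := by
    rw [hcdef, norm_inv, hμdef, norm_mul, hω, mul_one, Complex.norm_real,
      Real.norm_eq_abs, abs_of_pos hρ]
  -- the complete space of candidate functions
  let X := {p : C(↥(Icc (0:ℝ) 1), Fin d → ℂ) // p pt0 = 0 ∧ p pt1 = V}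
  haveI : CompleteSpace X := by
    refine IsClosed.completeSpace_coe (hs := ?_)
    exact ((isClosed_eq (continuous_eval_const pt0) continuous_const).inter
      (isClosed_eq (continuous_eval_const pt1) continuous_const))
  haveI : Nonempty X := by
    refine ⟨⟨⟨fun t => (t : ℝ) • V, by continuity⟩, ?_, ?_⟩⟩
    · show ((pt0 : ↥(Icc (0:ℝ) 1)) : ℝ) • V = 0
      have : ((pt0 : ↥(Icc (0:ℝ) 1)) : ℝ) = 0 := rfl
      rw [this, zero_smul]
    · show ((pt1 : ↥(Icc (0:ℝ) 1)) : ℝ) • V = V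
      have : ((pt1 : ↥(Icc (0:ℝ) 1)) : ℝ) = 1 := rfl
      rw [this, one_smul]
  set K : NNReal := ⟨lam / ρ, by positivity⟩ with hK
  have hK1 : K < 1 := by
    rw [← NNReal.coe_lt_coe]
    show lam / ρ < 1
    exact (div_lt_one hρ).2 hlamρ
  set T' : X → X := fun p => ⟨T A c p.1,
    T_pt0 A c p.1 p.2.1, T_pt1 A hμ hcdef V hV p.1 p.2.2⟩ with hT'
  have hcontr : ContractingWith K T' := by
    refine ⟨hK1, LipschitzWith.of_dist_le_mul fun p q => ?_⟩
    have := T_lip A hρ hlam.le hA hnc p.1 q.1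
      (by rw [p.2.1, q.2.1]) (by rw [p.2.2, q.2.2])
    rw [Subtype.dist_eq, Subtype.dist_eq]
    exact this
  set F : X := ContractingWith.fixedPoint T' hcontr with hF
  have hfixF : T' F = F := hcontr.fixedPoint_isFixedPt
  have hfix : T A c F.1 = F.1 := congrArg Subtype.val hfixF
  set f : C(↥(Icc (0:ℝ) 1), Fin d → ℂ) := F.1 with hfdef
  have hf0 : f pt0 = 0 := F.2.1
  have hf1 : f pt1 = V := F.2.2
  refine ⟨fun x => f (pr x), ⟨?_, ?_, ?_, ?_⟩, ?_⟩
  · exact (f.continuous.comp continuous_projIcc).continuousOn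
  · show f (pr 0) = 0
    have : pr (0:ℝ) = pt0 := projIcc_of_le_left _ le_rfl
    rw [this, hf0]
  · show f (pr 1) = V
    have : pr (1:ℝ) = pt1 := projIcc_of_right_le _ le_rfl
    rw [this, hf1]
  · intro r x hx1 hx2
    have h0x : (0:ℝ) ≤ x := le_trans (by positivity) hx1
    have hx1' : x < 1 := by
      refine lt_of_lt_of_le hx2 ?_
      rw [div_le_one hB']
      have := r.isLt
      have : (r:ℝ) + 1 ≤ (B:ℝ) := by exact_mod_cast this
      linarith
    have hmem : x ∈ Icc (0:ℝ) 1 := ⟨h0x, hx1'.le⟩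
    have hprx : pr x = ⟨x, hmem⟩ := projIcc_of_mem _ hmem
    show f (pr x) = c • _
    calc f (pr x) = T A c f (pr x) := by rw [hfix]
      _ = c • ∑ s : Fin B, (A s).mulVec (f (pr ((B:ℝ) * x - (s:ℝ)))) := by
          rw [T_apply, hprx]
      _ = c • ((∑ s ∈ Finset.univ.filter fun s : Fin B => s < r, (A s).mulVec V) +
            (A r).mulVec (f (pr ((B:ℝ) * x - (r:ℝ))))) := by
          rw [key A V f hf0 hf1 hB0 r x hx1 hx2]
  · intro Ψ hΨc hΨ
    obtain ⟨hΨ0, hΨ1, hΨr⟩ := hΨ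
    set g : C(↥(Icc (0:ℝ) 1), Fin d → ℂ) := ⟨(Icc (0:ℝ) 1).restrict Ψ, hΨc.restrict⟩
      with hgdef
    have hg0 : g pt0 = 0 := hΨ0
    have hg1 : g pt1 = V := hΨ1
    have hfixg : T A c g = g := by
      refine ContinuousMap.ext fun y => ?_
      rcases eq_or_lt_of_le y.2.2 with h1 | h1
      · have hy : y = pt1 := Subtype.ext h1
        rw [hy, hg1]
        exact T_pt1 A hμ hcdef V hV g hg1
      · have h0 : (0:ℝ) ≤ (y:ℝ) := y.2.1
        have hBy0 : (0:ℝ) ≤ (B:ℝ) * (y:ℝ) := by positivity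
        set n := ⌊(B:ℝ) * (y:ℝ)⌋₊ with hn
        have hnB : n < B := by
          have hlt : (B:ℝ) * (y:ℝ) < (B:ℝ) := by nlinarith
          exact (Nat.floor_lt hBy0).2 (by exact_mod_cast hlt)
        set r : Fin B := ⟨n, hnB⟩ with hr
        have hrn : (r : ℝ) = (n : ℝ) := rfl
        have hfl : (n:ℝ) ≤ (B:ℝ) * (y:ℝ) := Nat.floor_le hBy0
        have hfl2 : (B:ℝ) * (y:ℝ) < (n:ℝ) + 1 := Nat.lt_floor_add_one _
        have hr1 : (r:ℝ)/B ≤ (y:ℝ) := by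
          rw [div_le_iff₀ hB', hrn]
          linarith
        have hr2 : (y:ℝ) < ((r:ℝ)+1)/B := by
          rw [lt_div_iff₀ hB', hrn]
          linarith
        have hmem2 : (B:ℝ) * (y:ℝ) - (r:ℝ) ∈ Icc (0:ℝ) 1 := by
          rw [hrn]
          constructor
          · linarith
          · linarith
        have hgpr : g (pr ((B:ℝ) * (y:ℝ) - (r:ℝ))) = Ψ ((B:ℝ) * (y:ℝ) - (r:ℝ)) := by
          rw [show pr ((B:ℝ) * (y:ℝ) - (r:ℝ)) = ⟨_, hmem2⟩ from projIcc_of_mem _ hmem2]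
          rfl
        calc (T A c g) y
            = c • ∑ s : Fin B, (A s).mulVec (g (pr ((B:ℝ) * (y:ℝ) - (s:ℝ)))) := T_apply _ _ _ _
          _ = c • ((∑ s ∈ Finset.univ.filter fun s : Fin B => s < r, (A s).mulVec V) +
                (A r).mulVec (g (pr ((B:ℝ) * (y:ℝ) - (r:ℝ))))) := by
              rw [key A V g hg0 hg1 hB0 r (y:ℝ) hr1 hr2]
          _ = c • ((∑ s ∈ Finset.univ.filter fun s : Fin B => s < r, (A s).mulVec V) +
                (A r).mulVec (Ψ ((B:ℝ) * (y:ℝ) - (r:ℝ)))) := by rw [hgpr]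
          _ = Ψ (y:ℝ) := (hΨr r (y:ℝ) hr1 hr2).symm
          _ = g y := rfl
    have hgF : (⟨g, hg0, hg1⟩ : X) = F := by
      rw [hF]
      exact hcontr.fixedPoint_unique (Subtype.ext hfixg)
    have hgf : g = f := congrArg Subtype.val hgF
    intro x hx
    have h1 : Ψ x = g ⟨x, hx⟩ := rfl
    rw [h1, hgf]
    show f ⟨x, hx⟩ = f (pr x)
    rw [show pr x = ⟨x, hx⟩ from projIcc_of_mem _ hx]
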